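/- Let $k \geq \ell \geq \ell' \geq t \geq 1$ and let $\omega_1, \omega_2 : \{0,1,\ldots,k\} \to \mathbb{R}_{\geq 0}$ be non-increasing. Let $\mathcal{F} \subseteq \binom{[k]}{\leq \ell}$, $\mathcal{G} \subseteq \binom{[k]}{\leq \ell'}$ be non-empty cross $t$-intersecting with maximal necessary intersection point $a \geq t+1$, such that $\mathcal{F} \setminus \mathcal{F}^a$ and $\mathcal{G} \setminus \mathcal{G}^a$ are both non-empty. Then there exist non-empty cross $t$-intersecting families $\mathcal{F}^* \subseteq \binom{[k]}{\leq \ell}$, $\mathcal{G}^* \subseteq \binom{[k]}{\leq \ell'}$ with $\omega_1(\mathcal{F}^*) + \omega_2(\mathcal{G}^*) \geq \omega_1(\mathcal{F}) + \omega_2(\mathcal{G})$ whose maximal necessary intersection point is strictly smaller than $a$. -/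

import Mathlib

/-- `b` is a necessary intersection point of the cross `t`-intersecting pair `F, G`. -/
def NIP (t : ℕ) (F G : Finset (Finset ℕ)) (b : ℕ) : Prop :=
  ∃ A ∈ F, ∃ B ∈ G, (Finset.Icc 1 b ∩ A ∩ B).card = t ∧ b ∈ A ∧ b ∈ B

/-- There is a `b ∈ S` with exactly `t` elements of `S` in `[1, b]`
(the `t`-th smallest element of `S`). -/
lemma aux_tth (k t : ℕ) (ht : 1 ≤ t) (S : Finset ℕ) (hSk : S ⊆ Finset.Icc 1 k)
    (hS : t ≤ S.card) : ∃ b, b ∈ S ∧ (Finset.Icc 1 b ∩ S).card = t := by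
  classical
  have hPk : t ≤ (Finset.Icc 1 k ∩ S).card := by
    rwa [Finset.inter_eq_right.mpr hSk]
  have hex : ∃ b, t ≤ (Finset.Icc 1 b ∩ S).card := ⟨k, hPk⟩
  set b := Nat.find hex with hbdef
  have hPb : t ≤ (Finset.Icc 1 b ∩ S).card := Nat.find_spec hex
  have hmin : ¬ t ≤ (Finset.Icc 1 (b - 1) ∩ S).card → True := fun _ => trivial
  have hb1 : 1 ≤ b := by
    by_contra h
    have hb0 : b = 0 := by omega
    have hempty : Finset.Icc 1 0 = (∅ : Finset ℕ) := Finset.Icc_eq_empty (by omega)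
    rw [hb0, hempty] at hPb
    simp at hPb
    omega
  have hcard_lt : (Finset.Icc 1 (b - 1) ∩ S).card < t := by
    have := Nat.find_min hex (show b - 1 < b by omega)
    omega
  have hbS : b ∈ S := by
    by_contra hbS
    have heq : Finset.Icc 1 b ∩ S = Finset.Icc 1 (b - 1) ∩ S := by
      ext x
      simp only [Finset.mem_inter, Finset.mem_Icc]
      constructor
      · rintro ⟨⟨h1, h2⟩, hxS⟩
        have hxb : x ≠ b := fun h => hbS (h ▸ hxS)
        exact ⟨⟨h1, by omega⟩, hxS⟩
      · rintro ⟨⟨h1, h2⟩, hxS⟩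
        exact ⟨⟨h1, by omega⟩, hxS⟩
    rw [heq] at hPb
    omega
  refine ⟨b, hbS, le_antisymm ?_ hPb⟩
  have hsub : Finset.Icc 1 b ∩ S ⊆ insert b (Finset.Icc 1 (b - 1) ∩ S) := by
    intro x hx
    simp only [Finset.mem_inter, Finset.mem_Icc] at hx
    simp only [Finset.mem_insert, Finset.mem_inter, Finset.mem_Icc]
    rcases eq_or_ne x b with h | h
    · exact Or.inl h
    · exact Or.inr ⟨⟨hx.1.1, by omega⟩, hx.2⟩
  have h1 := Finset.card_le_card hsub
  have h2 := Finset.card_insert_le b (Finset.Icc 1 (b - 1) ∩ S)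
  omega

theorem reduction_step (k l l' t a : ℕ)
    (hkl : l ≤ k) (hll : l' ≤ l) (htl : t ≤ l') (ht : 1 ≤ t)
    (w1 w2 : ℕ → ℝ)
    (hw1pos : ∀ i, 0 ≤ w1 i) (hw2pos : ∀ i, 0 ≤ w2 i)
    (hw1mono : ∀ i j, i ≤ j → j ≤ k → w1 j ≤ w1 i)
    (hw2mono : ∀ i j, i ≤ j → j ≤ k → w2 j ≤ w2 i)
    (F G : Finset (Finset ℕ))
    (hF : ∀ A ∈ F, A ⊆ Finset.Icc 1 k ∧ A.card ≤ l)
    (hG : ∀ B ∈ G, B ⊆ Finset.Icc 1 k ∧ B.card ≤ l')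
    (hFne : F.Nonempty) (hGne : G.Nonempty)
    (hcross : ∀ A ∈ F, ∀ B ∈ G, t ≤ (A ∩ B).card)
    (ha : NIP t F G a) (hmax : ∀ b, NIP t F G b → b ≤ a)
    (hat : t + 1 ≤ a)
    (hFa : (F \ F.filter (fun A =>
      ∃ B ∈ G, (Finset.Icc 1 a ∩ A ∩ B).card = t ∧ a ∈ A ∧ a ∈ B)).Nonempty)
    (hGa : (G \ G.filter (fun B =>
      ∃ A ∈ F, (Finset.Icc 1 a ∩ A ∩ B).card = t ∧ a ∈ A ∧ a ∈ B)).Nonempty) :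
    ∃ F' G' : Finset (Finset ℕ),
      (∀ A ∈ F', A ⊆ Finset.Icc 1 k ∧ A.card ≤ l) ∧
      (∀ B ∈ G', B ⊆ Finset.Icc 1 k ∧ B.card ≤ l') ∧
      F'.Nonempty ∧ G'.Nonempty ∧
      (∀ A ∈ F', ∀ B ∈ G', t ≤ (A ∩ B).card) ∧
      (∑ A ∈ F, w1 A.card) + (∑ B ∈ G, w2 B.card) ≤
        (∑ A ∈ F', w1 A.card) + (∑ B ∈ G', w2 B.card) ∧
      (∀ b, NIP t F' G' b → b < a) := by
  classical
  set U : Finset ℕ := Finset.Icc 1 (a - 1) with hU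
  set Fa := F.filter (fun A =>
      ∃ B ∈ G, (Finset.Icc 1 a ∩ A ∩ B).card = t ∧ a ∈ A ∧ a ∈ B) with hFadef
  set Ga := G.filter (fun B =>
      ∃ A ∈ F, (Finset.Icc 1 a ∩ A ∩ B).card = t ∧ a ∈ A ∧ a ∈ B) with hGadef
  have ha1 : 1 ≤ a := by omega
  -- P0 : every pair t-intersects inside [1, a]
  have P0 : ∀ A ∈ F, ∀ B ∈ G, t ≤ (Finset.Icc 1 a ∩ (A ∩ B)).card := by
    intro A hA B hB
    obtain ⟨b, hbS, hb⟩ := aux_tth k t ht (A ∩ B)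
      (fun x hx => (hF A hA).1 (Finset.mem_of_mem_inter_left hx)) (hcross A hA B hB)
    have hbA := Finset.mem_inter.mp hbS
    have hnip : NIP t F G b :=
      ⟨A, hA, B, hB, by rw [Finset.inter_assoc]; exact hb, hbA.1, hbA.2⟩
    have hba := hmax b hnip
    calc t = (Finset.Icc 1 b ∩ (A ∩ B)).card := hb.symm
      _ ≤ (Finset.Icc 1 a ∩ (A ∩ B)).card :=
        Finset.card_le_card
          (Finset.inter_subset_inter (Finset.Icc_subset_Icc_right hba) subset_rfl)
  -- P1 : pairs not both in the `a`-families t-intersect inside [1, a-1]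
  have P1 : ∀ A ∈ F, ∀ B ∈ G, ¬(A ∈ Fa ∧ B ∈ Ga) → t ≤ (U ∩ (A ∩ B)).card := by
    intro A hA B hB hnot
    have h0 := P0 A hA B hB
    by_cases hab : a ∈ A ∧ a ∈ B
    · by_cases hc : (Finset.Icc 1 a ∩ (A ∩ B)).card = t
      · exfalso
        apply hnot
        have hc' : (Finset.Icc 1 a ∩ A ∩ B).card = t := by
          rw [Finset.inter_assoc]; exact hc
        constructor
        · rw [hFadef]
          exact Finset.mem_filter.mpr ⟨hA, ⟨B, hB, hc', hab.1, hab.2⟩⟩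
        · rw [hGadef]
          exact Finset.mem_filter.mpr ⟨hB, ⟨A, hA, hc', hab.1, hab.2⟩⟩
      · have h1 : t + 1 ≤ (Finset.Icc 1 a ∩ (A ∩ B)).card := by omega
        have hsub : Finset.Icc 1 a ∩ (A ∩ B) ⊆ insert a (U ∩ (A ∩ B)) := by
          intro x hx
          simp only [Finset.mem_inter, Finset.mem_Icc] at hx
          simp only [Finset.mem_insert, hU, Finset.mem_inter, Finset.mem_Icc]
          rcases eq_or_ne x a with h | h
          · exact Or.inl h
          · exact Or.inr ⟨⟨hx.1.1, by omega⟩, hx.2⟩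
        have h2 := Finset.card_le_card hsub
        have h3 := Finset.card_insert_le a (U ∩ (A ∩ B))
        omega
    · have heq : Finset.Icc 1 a ∩ (A ∩ B) = U ∩ (A ∩ B) := by
        ext x
        simp only [Finset.mem_inter, Finset.mem_Icc, hU]
        constructor
        · rintro ⟨⟨h1, h2⟩, hxA, hxB⟩
          have hxa : x ≠ a := by
            rintro rfl
            exact hab ⟨hxA, hxB⟩
          exact ⟨⟨h1, by omega⟩, hxA, hxB⟩
        · rintro ⟨⟨h1, h2⟩, hxA, hxB⟩
          exact ⟨⟨h1, by omega⟩, hxA, hxB⟩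
      rw [heq] at h0
      exact h0
  -- the four candidate families
  set PF := (Finset.Icc 1 k).powerset with hPF
  set FB := PF.filter (fun X => X.card ≤ l ∧ ∃ C ∈ F \ Fa, C ∩ U ⊆ X) with hFB
  set GB := PF.filter
    (fun D => D.card ≤ l' ∧ ∀ C ∈ F \ Fa, t ≤ (U ∩ (C ∩ D)).card) with hGB
  set FA := PF.filter
    (fun X => X.card ≤ l ∧ ∀ D0 ∈ G \ Ga, t ≤ (U ∩ (X ∩ D0)).card) with hFA
  set GA := PF.filter (fun D => D.card ≤ l' ∧ ∃ D0 ∈ G \ Ga, D0 ∩ U ⊆ D) with hGA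
  -- basic membership facts
  have hGsubGB : G ⊆ GB := by
    intro D hD
    rw [hGB]
    refine Finset.mem_filter.mpr ⟨Finset.mem_powerset.mpr (hG D hD).1, (hG D hD).2, ?_⟩
    intro C hC
    have hCm := Finset.mem_sdiff.mp hC
    exact P1 C hCm.1 D hD (fun hand => hCm.2 hand.1)
  have hFsubFA : F ⊆ FA := by
    intro A hA
    rw [hFA]
    refine Finset.mem_filter.mpr ⟨Finset.mem_powerset.mpr (hF A hA).1, (hF A hA).2, ?_⟩
    intro D0 hD0
    have hDm := Finset.mem_sdiff.mp hD0
    exact P1 A hA D0 hDm.1 (fun hand => hDm.2 hand.2)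
  have hFBne : FB.Nonempty := by
    obtain ⟨C0, hC0⟩ := hFa
    have hC0m := Finset.mem_sdiff.mp hC0
    refine ⟨C0, ?_⟩
    rw [hFB]
    exact Finset.mem_filter.mpr ⟨Finset.mem_powerset.mpr (hF C0 hC0m.1).1,
      (hF C0 hC0m.1).2, ⟨C0, hC0, Finset.inter_subset_left⟩⟩
  have hGAne : GA.Nonempty := by
    obtain ⟨D0, hD0⟩ := hGa
    have hD0m := Finset.mem_sdiff.mp hD0
    refine ⟨D0, ?_⟩
    rw [hGA]
    exact Finset.mem_filter.mpr ⟨Finset.mem_powerset.mpr (hG D0 hD0m.1).1,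
      (hG D0 hD0m.1).2, ⟨D0, hD0, Finset.inter_subset_left⟩⟩
  have hGBne : GB.Nonempty := ⟨hGne.choose, hGsubGB hGne.choose_spec⟩
  have hFAne : FA.Nonempty := ⟨hFne.choose, hFsubFA hFne.choose_spec⟩
  -- prefix property of the two candidate pairs
  have hBpair : ∀ X ∈ FB, ∀ D ∈ GB, t ≤ (U ∩ (X ∩ D)).card := by
    intro X hX D hD
    rw [hFB] at hX; rw [hGB] at hD
    obtain ⟨-, -, C, hC, hCX⟩ := Finset.mem_filter.mp hX
    obtain ⟨-, -, hDall⟩ := Finset.mem_filter.mp hD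
    refine le_trans (hDall C hC) (Finset.card_le_card ?_)
    intro x hx
    simp only [Finset.mem_inter] at hx ⊢
    exact ⟨hx.1, hCX (Finset.mem_inter.mpr ⟨hx.2.1, hx.1⟩), hx.2.2⟩
  have hApair : ∀ X ∈ FA, ∀ D ∈ GA, t ≤ (U ∩ (X ∩ D)).card := by
    intro X hX D hD
    rw [hFA] at hX; rw [hGA] at hD
    obtain ⟨-, -, hXall⟩ := Finset.mem_filter.mp hX
    obtain ⟨-, -, D0, hD0, hD0D⟩ := Finset.mem_filter.mp hD
    refine le_trans (hXall D0 hD0) (Finset.card_le_card ?_)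
    intro x hx
    simp only [Finset.mem_inter] at hx ⊢
    exact ⟨hx.1, hx.2.1, hD0D (Finset.mem_inter.mpr ⟨hx.2.2, hx.1⟩)⟩
  -- generic consequences of the prefix property
  have mkCross : ∀ (F' G' : Finset (Finset ℕ)),
      (∀ A ∈ F', ∀ B ∈ G', t ≤ (U ∩ (A ∩ B)).card) →
      ∀ A ∈ F', ∀ B ∈ G', t ≤ (A ∩ B).card := by
    intro F' G' hpref A hA B hB
    exact le_trans (hpref A hA B hB) (Finset.card_le_card Finset.inter_subset_right)
  have mkNIP : ∀ (F' G' : Finset (Finset ℕ)),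
      (∀ A ∈ F', ∀ B ∈ G', t ≤ (U ∩ (A ∩ B)).card) →
      ∀ b, NIP t F' G' b → b < a := by
    intro F' G' hpref b hb
    obtain ⟨A, hA, B, hB, hcard, hbA, hbB⟩ := hb
    by_contra hba
    push_neg at hba
    have hp := hpref A hA B hB
    have hnotmem : b ∉ U ∩ (A ∩ B) := by
      simp only [hU, Finset.mem_inter, Finset.mem_Icc]
      rintro ⟨⟨-, h2⟩, -⟩
      omega
    have hsub : insert b (U ∩ (A ∩ B)) ⊆ Finset.Icc 1 b ∩ (A ∩ B) := by
      intro x hx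
      simp only [Finset.mem_insert, hU, Finset.mem_inter, Finset.mem_Icc] at hx
      simp only [Finset.mem_inter, Finset.mem_Icc]
      rcases hx with rfl | ⟨⟨h1, h2⟩, hxA, hxB⟩
      · exact ⟨⟨by omega, le_refl x⟩, hbA, hbB⟩
      · exact ⟨⟨h1, by omega⟩, hxA, hxB⟩
    have h1 := Finset.card_le_card hsub
    rw [Finset.card_insert_of_notMem hnotmem] at h1
    have hcard' : (Finset.Icc 1 b ∩ (A ∩ B)).card = t := by
      rw [← Finset.inter_assoc]; exact hcard
    omega
  -- the erased sets
  have haDefF : ∀ A ∈ F \ FB, a ∈ A := by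
    intro A hA
    have hAm := Finset.mem_sdiff.mp hA
    by_cases hAFa : A ∈ Fa
    · rw [hFadef] at hAFa
      obtain ⟨-, B, -, -, haA, -⟩ := Finset.mem_filter.mp hAFa
      exact haA
    · exfalso
      apply hAm.2
      rw [hFB]
      exact Finset.mem_filter.mpr ⟨Finset.mem_powerset.mpr (hF A hAm.1).1,
        (hF A hAm.1).2, ⟨A, Finset.mem_sdiff.mpr ⟨hAm.1, hAFa⟩, Finset.inter_subset_left⟩⟩
  have haDefG : ∀ B ∈ G \ GA, a ∈ B := by
    intro B hB
    have hBm := Finset.mem_sdiff.mp hB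
    by_cases hBGa : B ∈ Ga
    · rw [hGadef] at hBGa
      obtain ⟨-, A, -, -, -, haB⟩ := Finset.mem_filter.mp hBGa
      exact haB
    · exfalso
      apply hBm.2
      rw [hGA]
      exact Finset.mem_filter.mpr ⟨Finset.mem_powerset.mpr (hG B hBm.1).1,
        (hG B hBm.1).2, ⟨B, Finset.mem_sdiff.mpr ⟨hBm.1, hBGa⟩, Finset.inter_subset_left⟩⟩
  have hUa : ∀ (X Y : Finset ℕ), U ∩ (X.erase a ∩ Y) = U ∩ (X ∩ Y) := by
    intro X Y
    ext x
    simp only [Finset.mem_inter, Finset.mem_erase, hU, Finset.mem_Icc]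
    constructor
    · rintro ⟨⟨h1, h2⟩, ⟨-, hxX⟩, hxY⟩
      exact ⟨⟨h1, h2⟩, hxX, hxY⟩
    · rintro ⟨⟨h1, h2⟩, hxX, hxY⟩
      exact ⟨⟨h1, h2⟩, ⟨by omega, hxX⟩, hxY⟩
  have hbetaF : ∀ A ∈ F \ FB, A.erase a ∈ FA ∧ A.erase a ∉ F := by
    intro A hA
    have hAm := Finset.mem_sdiff.mp hA
    constructor
    · rw [hFA]
      refine Finset.mem_filter.mpr ⟨Finset.mem_powerset.mpr
        (fun x hx => (hF A hAm.1).1 (Finset.erase_subset a A hx)), ?_, ?_⟩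
      · exact le_trans (Finset.card_le_card (Finset.erase_subset a A)) (hF A hAm.1).2
      · intro D0 hD0
        have hDm := Finset.mem_sdiff.mp hD0
        rw [hUa]
        exact P1 A hAm.1 D0 hDm.1 (fun hand => hDm.2 hand.2)
    · intro hEF
      have hEFa : A.erase a ∉ Fa := by
        rw [hFadef]
        intro hmem
        obtain ⟨-, B, -, -, haE, -⟩ := Finset.mem_filter.mp hmem
        exact Finset.notMem_erase a A haE
      apply hAm.2
      rw [hFB]
      refine Finset.mem_filter.mpr ⟨Finset.mem_powerset.mpr (hF A hAm.1).1,
        (hF A hAm.1).2, ⟨A.erase a, Finset.mem_sdiff.mpr ⟨hEF, hEFa⟩, ?_⟩⟩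
      exact fun x hx => Finset.erase_subset a A (Finset.mem_of_mem_inter_left hx)
  have hbetaG : ∀ B ∈ G \ GA, B.erase a ∈ GB ∧ B.erase a ∉ G := by
    intro B hB
    have hBm := Finset.mem_sdiff.mp hB
    constructor
    · rw [hGB]
      refine Finset.mem_filter.mpr ⟨Finset.mem_powerset.mpr
        (fun x hx => (hG B hBm.1).1 (Finset.erase_subset a B hx)), ?_, ?_⟩
      · exact le_trans (Finset.card_le_card (Finset.erase_subset a B)) (hG B hBm.1).2
      · intro C hC
        have hCm := Finset.mem_sdiff.mp hC
        have heq : U ∩ (C ∩ B.erase a) = U ∩ (C ∩ B) := by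
          ext x
          simp only [Finset.mem_inter, Finset.mem_erase, hU, Finset.mem_Icc]
          constructor
          · rintro ⟨⟨h1, h2⟩, hxC, -, hxB⟩
            exact ⟨⟨h1, h2⟩, hxC, hxB⟩
          · rintro ⟨⟨h1, h2⟩, hxC, hxB⟩
            exact ⟨⟨h1, h2⟩, hxC, by omega, hxB⟩
        rw [heq]
        exact P1 C hCm.1 B hBm.1 (fun hand => hCm.2 hand.1)
    · intro hEG
      have hEGa : B.erase a ∉ Ga := by
        rw [hGadef]
        intro hmem
        obtain ⟨-, A, -, -, -, haE⟩ := Finset.mem_filter.mp hmem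
        exact Finset.notMem_erase a B haE
      apply hBm.2
      rw [hGA]
      refine Finset.mem_filter.mpr ⟨Finset.mem_powerset.mpr (hG B hBm.1).1,
        (hG B hBm.1).2, ⟨B.erase a, Finset.mem_sdiff.mpr ⟨hEG, hEGa⟩, ?_⟩⟩
      exact fun x hx => Finset.erase_subset a B (Finset.mem_of_mem_inter_left hx)
  -- weight inequalities
  have hpartF : ∑ A ∈ F \ FB, w1 A.card + ∑ A ∈ F ∩ FB, w1 A.card = ∑ A ∈ F, w1 A.card := by
    have h := Finset.sum_sdiff (f := fun A => w1 A.card)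
      (Finset.inter_subset_left : F ∩ FB ⊆ F)
    rwa [Finset.sdiff_inter_self_left] at h
  have hpartG : ∑ B ∈ G \ GA, w2 B.card + ∑ B ∈ G ∩ GA, w2 B.card = ∑ B ∈ G, w2 B.card := by
    have h := Finset.sum_sdiff (f := fun B => w2 B.card)
      (Finset.inter_subset_left : G ∩ GA ⊆ G)
    rwa [Finset.sdiff_inter_self_left] at h
  have c1 : (∑ A ∈ F, w1 A.card) - (∑ A ∈ F \ FB, w1 A.card) ≤ ∑ X ∈ FB, w1 X.card := by
    have h : ∑ A ∈ F ∩ FB, w1 A.card ≤ ∑ X ∈ FB, w1 X.card :=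
      Finset.sum_le_sum_of_subset_of_nonneg
        (Finset.inter_subset_right : F ∩ FB ⊆ FB) (fun i _ _ => hw1pos _)
    linarith
  have c4 : (∑ B ∈ G, w2 B.card) - (∑ B ∈ G \ GA, w2 B.card) ≤ ∑ D ∈ GA, w2 D.card := by
    have h : ∑ B ∈ G ∩ GA, w2 B.card ≤ ∑ D ∈ GA, w2 D.card :=
      Finset.sum_le_sum_of_subset_of_nonneg
        (Finset.inter_subset_right : G ∩ GA ⊆ GA) (fun i _ _ => hw2pos _)
    linarith
  have hcardk : ∀ X : Finset ℕ, X ⊆ Finset.Icc 1 k → X.card ≤ k := by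
    intro X hX
    calc X.card ≤ (Finset.Icc 1 k).card := Finset.card_le_card hX
      _ = k := by rw [Nat.card_Icc]; omega
  have c2 : (∑ B ∈ G, w2 B.card) + (∑ B ∈ G \ GA, w2 B.card) ≤ ∑ D ∈ GB, w2 D.card := by
    have hunion_sub : G ∪ (G \ GA).image (fun B => B.erase a) ⊆ GB := by
      apply Finset.union_subset hGsubGB
      intro E hE
      obtain ⟨B, hB, rfl⟩ := Finset.mem_image.mp hE
      exact (hbetaG B hB).1
    have hdisj : Disjoint G ((G \ GA).image (fun B => B.erase a)) := by
      rw [Finset.disjoint_right]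
      intro E hE
      obtain ⟨B, hB, rfl⟩ := Finset.mem_image.mp hE
      exact (hbetaG B hB).2
    have h1 : ∑ D ∈ G ∪ (G \ GA).image (fun B => B.erase a), w2 D.card
        ≤ ∑ D ∈ GB, w2 D.card :=
      Finset.sum_le_sum_of_subset_of_nonneg hunion_sub (fun i _ _ => hw2pos _)
    rw [Finset.sum_union hdisj] at h1
    have h2 : ∑ E ∈ (G \ GA).image (fun B => B.erase a), w2 E.card
        = ∑ B ∈ G \ GA, w2 (B.erase a).card := by
      apply Finset.sum_image
      intro x hx y hy hxy
      have hax := haDefG x hx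
      have hay := haDefG y hy
      rw [← Finset.insert_erase hax, ← Finset.insert_erase hay, show x.erase a = y.erase a from hxy]
    have h3 : ∑ B ∈ G \ GA, w2 B.card ≤ ∑ B ∈ G \ GA, w2 (B.erase a).card := by
      apply Finset.sum_le_sum
      intro B hB
      have haB := haDefG B hB
      rw [Finset.card_erase_of_mem haB]
      exact hw2mono (B.card - 1) B.card (by omega)
        (hcardk B (hG B (Finset.mem_sdiff.mp hB).1).1)
    rw [h2] at h1
    linarith
  have c3 : (∑ A ∈ F, w1 A.card) + (∑ A ∈ F \ FB, w1 A.card) ≤ ∑ X ∈ FA, w1 X.card := by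
    have hunion_sub : F ∪ (F \ FB).image (fun A => A.erase a) ⊆ FA := by
      apply Finset.union_subset hFsubFA
      intro E hE
      obtain ⟨A, hA, rfl⟩ := Finset.mem_image.mp hE
      exact (hbetaF A hA).1
    have hdisj : Disjoint F ((F \ FB).image (fun A => A.erase a)) := by
      rw [Finset.disjoint_right]
      intro E hE
      obtain ⟨A, hA, rfl⟩ := Finset.mem_image.mp hE
      exact (hbetaF A hA).2
    have h1 : ∑ X ∈ F ∪ (F \ FB).image (fun A => A.erase a), w1 X.card
        ≤ ∑ X ∈ FA, w1 X.card :=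
      Finset.sum_le_sum_of_subset_of_nonneg hunion_sub (fun i _ _ => hw1pos _)
    rw [Finset.sum_union hdisj] at h1
    have h2 : ∑ E ∈ (F \ FB).image (fun A => A.erase a), w1 E.card
        = ∑ A ∈ F \ FB, w1 (A.erase a).card := by
      apply Finset.sum_image
      intro x hx y hy hxy
      have hax := haDefF x hx
      have hay := haDefF y hy
      rw [← Finset.insert_erase hax, ← Finset.insert_erase hay, show x.erase a = y.erase a from hxy]
    have h3 : ∑ A ∈ F \ FB, w1 A.card ≤ ∑ A ∈ F \ FB, w1 (A.erase a).card := by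
      apply Finset.sum_le_sum
      intro A hA
      have haA := haDefF A hA
      rw [Finset.card_erase_of_mem haA]
      exact hw1mono (A.card - 1) A.card (by omega)
        (hcardk A (hF A (Finset.mem_sdiff.mp hA).1).1)
    rw [h2] at h1
    linarith
  -- membership bounds for the candidates
  have hFBbound : ∀ A ∈ FB, A ⊆ Finset.Icc 1 k ∧ A.card ≤ l := by
    intro A hA
    rw [hFB] at hA
    obtain ⟨hp, hcard, -⟩ := Finset.mem_filter.mp hA
    exact ⟨Finset.mem_powerset.mp hp, hcard⟩
  have hGBbound : ∀ B ∈ GB, B ⊆ Finset.Icc 1 k ∧ B.card ≤ l' := by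
    intro B hB
    rw [hGB] at hB
    obtain ⟨hp, hcard, -⟩ := Finset.mem_filter.mp hB
    exact ⟨Finset.mem_powerset.mp hp, hcard⟩
  have hFAbound : ∀ A ∈ FA, A ⊆ Finset.Icc 1 k ∧ A.card ≤ l := by
    intro A hA
    rw [hFA] at hA
    obtain ⟨hp, hcard, -⟩ := Finset.mem_filter.mp hA
    exact ⟨Finset.mem_powerset.mp hp, hcard⟩
  have hGAbound : ∀ B ∈ GA, B ⊆ Finset.Icc 1 k ∧ B.card ≤ l' := by
    intro B hB
    rw [hGA] at hB
    obtain ⟨hp, hcard, -⟩ := Finset.mem_filter.mp hB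
    exact ⟨Finset.mem_powerset.mp hp, hcard⟩
  -- choose the better of the two candidate pairs
  by_cases hcase : (∑ A ∈ F, w1 A.card) + (∑ B ∈ G, w2 B.card) ≤
      (∑ X ∈ FB, w1 X.card) + (∑ D ∈ GB, w2 D.card)
  · exact ⟨FB, GB, hFBbound, hGBbound, hFBne, hGBne,
      mkCross FB GB hBpair, hcase, mkNIP FB GB hBpair⟩
  · push_neg at hcase
    have hw : (∑ A ∈ F, w1 A.card) + (∑ B ∈ G, w2 B.card) ≤
        (∑ X ∈ FA, w1 X.card) + (∑ D ∈ GA, w2 D.card) := by linarith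
    exact ⟨FA, GA, hFAbound, hGAbound, hFAne, hGAne,
      mkCross FA GA hApair, hw, mkNIP FA GA hApair⟩
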